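/- Let F be a positive integer and let C(F) = {0} ∪ {n ∈ ℕ : n ≥ (F+1)/2}∖{F} if F is odd, and C(F) = {0} ∪ {n ∈ ℕ : n ≥ F/2 + 1}∖{F} if F is even. Then: (1) the cardinality of C(F)∖θ(C(F)) equals ⌊(F−1)/2⌋; (2) if P is an irreducible numerical semigroup with Frobenius number F, x ∈ msg(P) satisfies F/2 < x < F, 2x − F ∉ P, 3x ≠ 2F, 4x ≠ 3F, and F − x < m(P), and Q = (P∖{x}) ∪ {F − x}, then Q is a numerical semigroup with Frobenius number F and the cardinality of Q∖θ(Q) is strictly smaller than the cardinality of P∖θ(P). -/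

import Mathlib

def IsNumericalSemigroup (S : Set ℕ) : Prop :=
  0 ∈ S ∧ (∀ a ∈ S, ∀ b ∈ S, a + b ∈ S) ∧ Sᶜ.Finite

noncomputable def frobNS (S : Set ℕ) : ℤ :=
  sSup (insert (-1) ((fun n : ℕ => (n : ℤ)) '' Sᶜ))

def toZNS (S : Set ℕ) : Set ℤ := {z : ℤ | ∃ n ∈ S, (n : ℤ) = z}

noncomputable def genusNS (S : Set ℕ) : ℕ := Sᶜ.ncard

def smallNS (S : Set ℕ) : Set ℕ := {s ∈ S | (s : ℤ) < frobNS S}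

noncomputable def nNS (S : Set ℕ) : ℕ := (smallNS S).ncard

def LgapsNS (S : Set ℕ) : Set ℕ :=
  {x : ℕ | x ∉ S ∧ frobNS S - (x : ℤ) ∉ toZNS (smallNS S)}

noncomputable def lNS (S : Set ℕ) : ℕ := (LgapsNS S).ncard

noncomputable def hNS (S : Set ℕ) : ℕ := sSup (LgapsNS S)

def PFNS (S : Set ℕ) : Set ℤ :=
  {x : ℤ | x ∉ toZNS S ∧ ∀ s ∈ S, s ≠ 0 → x + (s : ℤ) ∈ toZNS S}

noncomputable def typeNS (S : Set ℕ) : ℕ := (PFNS S).ncard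

def msgNS (S : Set ℕ) : Set ℕ :=
  {x : ℕ | x ∈ S ∧ x ≠ 0 ∧ ∀ a ∈ S, ∀ b ∈ S, a ≠ 0 → b ≠ 0 → a + b ≠ x}

noncomputable def multNS (S : Set ℕ) : ℕ := sInf (S \ {0})

def IsIrreducibleNS (S : Set ℕ) : Prop :=
  IsNumericalSemigroup S ∧
    ¬ ∃ T₁ T₂ : Set ℕ, IsNumericalSemigroup T₁ ∧ IsNumericalSemigroup T₂ ∧
        S ⊂ T₁ ∧ S ⊂ T₂ ∧ S = T₁ ∩ T₂

def IsSymmetricNS (S : Set ℕ) : Prop := IsIrreducibleNS S ∧ Odd (frobNS S)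

def IsPseudoSymmetricNS (S : Set ℕ) : Prop := IsIrreducibleNS S ∧ Even (frobNS S)

def genNS (A : Set ℕ) : Set ℕ := (AddSubmonoid.closure A : Set ℕ)

def IsURSYNS (S : Set ℕ) : Prop :=
  ∃ T : Set ℕ, ∃ x : ℕ, IsSymmetricNS T ∧ x ∈ msgNS T ∧ S = T \ {x}

def IsURPSYNS (S : Set ℕ) : Prop :=
  ∃ T : Set ℕ, ∃ x : ℕ, IsPseudoSymmetricNS T ∧ x ∈ msgNS T ∧ S = T \ {x}

def deltaNS (S : Set ℕ) : Set ℕ := {s ∈ S | 2 * (s : ℤ) < frobNS S}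

def thetaNS (S : Set ℕ) : Set ℕ :=
  genNS (deltaNS S) ∪ {n : ℕ | frobNS S < (n : ℤ)}

noncomputable def CNS (F : ℕ) : Set ℕ :=
  if Odd F then (({0} : Set ℕ) ∪ {n : ℕ | (F + 1) / 2 ≤ n}) \ {F}
  else (({0} : Set ℕ) ∪ {n : ℕ | F / 2 + 1 ≤ n}) \ {F}

-- AUX LEMMAS
lemma frob_ub {S : Set ℕ} (hS : IsNumericalSemigroup S) {n : ℕ} (hn : n ∉ S) :
    (n : ℤ) ≤ frobNS S := by
  apply le_csSup ((hS.2.2.image _).insert _).bddAbove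
  exact Set.mem_insert_of_mem _ ⟨n, hn, rfl⟩

lemma mem_of_frob_lt {S : Set ℕ} (hS : IsNumericalSemigroup S) {n : ℕ}
    (h : frobNS S < (n : ℤ)) : n ∈ S := by
  by_contra hn; exact absurd (frob_ub hS hn) (not_le.mpr h)

lemma frob_notMem {S : Set ℕ} (hS : IsNumericalSemigroup S) {F : ℕ}
    (hFr : frobNS S = (F : ℤ)) : F ∉ S := by
  have h1 : sSup (insert (-1) ((fun n : ℕ => (n : ℤ)) '' Sᶜ)) ∈
      insert (-1) ((fun n : ℕ => (n : ℤ)) '' Sᶜ) :=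
    Set.Nonempty.csSup_mem ⟨-1, Set.mem_insert _ _⟩ ((hS.2.2.image _).insert _)
  have h2 : frobNS S ∈ insert (-1) ((fun n : ℕ => (n : ℤ)) '' Sᶜ) := h1
  rw [hFr] at h2
  rcases h2 with h | ⟨m, hm, he⟩
  · omega
  · have : m = F := by simp only [] at he; exact_mod_cast he
    subst this; exact hm

lemma frob_eq {S : Set ℕ} {F : ℕ} (hmem : F ∉ S) (hub : ∀ n ∉ S, n ≤ F) :
    frobNS S = (F : ℤ) := by
  apply IsGreatest.csSup_eq
  constructor
  · exact Set.mem_insert_of_mem _ ⟨F, hmem, rfl⟩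
  · rintro z (rfl | ⟨m, hm, rfl⟩)
    · omega
    · simp only []; exact_mod_cast hub m hm

lemma genNS_subset {A T : Set ℕ} (h0 : (0:ℕ) ∈ T)
    (hadd : ∀ a ∈ T, ∀ b ∈ T, a + b ∈ T) (hAT : A ⊆ T) : genNS A ⊆ T := by
  let M : AddSubmonoid ℕ := ⟨⟨T, fun ha hb => hadd _ ha _ hb⟩, h0⟩
  exact fun y hy => (AddSubmonoid.closure_le (S := M)).mpr hAT hy
lemma irred_symm {S : Set ℕ} {F : ℕ} (hirr : IsIrreducibleNS S) (hFr : frobNS S = (F : ℤ))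
    (hF0 : 0 < F) : ∀ z : ℕ, z ∉ S → 2 * z ≠ F → F - z ∈ S := by
  obtain ⟨hS, hnotex⟩ := hirr
  intro z hz h2z
  by_contra hFz
  have hub : ∀ y : ℕ, y ∉ S → y ≤ F := fun y hy => by
    have := frob_ub hS hy; rw [hFr] at this; exact_mod_cast this
  set A : Set ℕ := {y : ℕ | y ∉ S ∧ F - y ∉ S ∧ 2 * y ≠ F} with hA
  have hubA : ∀ y ∈ A, y ≤ F := fun y hy => hub y hy.1
  have hbdd : BddAbove A := ⟨F, fun y hy => hubA y hy⟩
  have hzA : z ∈ A := ⟨hz, hFz, h2z⟩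
  set h : ℕ := sSup A with hh
  have hhA : h ∈ A := Nat.sSup_mem ⟨z, hzA⟩ hbdd
  have hhF : h ≤ F := hubA h hhA
  have h0S : (0:ℕ) ∈ S := hS.1
  have hFhA : F - h ∈ A := by
    have h22 := hhA.2.2
    refine ⟨hhA.2.1, ?_, by omega⟩
    rw [Nat.sub_sub_self hhF]; exact hhA.1
  have hle : F - h ≤ h := le_csSup hbdd hFhA
  have h2h : F < 2 * h := by
    have h22 := hhA.2.2
    omega
  have hne0 : h ≠ 0 := fun he => hhA.1 (he ▸ h0S)
  have hhne : h ≠ F := by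
    intro he; apply hhA.2.1; rw [he]; simpa using h0S
  have hclos : ∀ b ∈ S, b ≠ 0 → h + b ∈ S := by
    intro b hb hb0
    by_contra hc
    have hbF : h + b ≤ F := hub _ hc
    have hsub : F - (h + b) ∉ S := by
      intro hin
      apply hhA.2.1
      have := hS.2.1 _ hin _ hb
      have he : F - (h + b) + b = F - h := by omega
      rwa [he] at this
    have hmemA : h + b ∈ A := ⟨hc, hsub, by omega⟩
    have := le_csSup hbdd hmemA
    omega
  have hT1 : IsNumericalSemigroup (insert h S) := by
    refine ⟨Set.mem_insert_of_mem _ h0S, ?_, ?_⟩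
    · rintro a (rfl | ha) b (rfl | hb)
      · exact Set.mem_insert_of_mem _ (mem_of_frob_lt hS (by rw [hFr]; push_cast; omega))
      · rcases eq_or_ne b 0 with rfl | hb0
        · simpa using Set.mem_insert h S
        · exact Set.mem_insert_of_mem _ (hclos b hb hb0)
      · rcases eq_or_ne a 0 with rfl | ha0
        · simpa using Set.mem_insert b S
        · exact Set.mem_insert_of_mem _ (by rw [add_comm]; exact hclos a ha ha0)
      · exact Set.mem_insert_of_mem _ (hS.2.1 _ ha _ hb)
    · exact hS.2.2.subset (Set.compl_subset_compl.mpr (Set.subset_insert _ _))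
  have hFS : F ∉ S := frob_notMem hS hFr
  have hT2 : IsNumericalSemigroup (insert F S) := by
    refine ⟨Set.mem_insert_of_mem _ h0S, ?_, ?_⟩
    · rintro a (rfl | ha) b (rfl | hb)
      · exact Set.mem_insert_of_mem _ (mem_of_frob_lt hS (by rw [hFr]; push_cast; omega))
      · rcases eq_or_ne b 0 with rfl | hb0
        · simpa using Set.mem_insert F S
        · exact Set.mem_insert_of_mem _ (mem_of_frob_lt hS (by rw [hFr]; push_cast; omega))
      · rcases eq_or_ne a 0 with rfl | ha0
        · simpa using Set.mem_insert b S
        · exact Set.mem_insert_of_mem _ (mem_of_frob_lt hS (by rw [hFr]; push_cast; omega))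
      · exact Set.mem_insert_of_mem _ (hS.2.1 _ ha _ hb)
    · exact hS.2.2.subset (Set.compl_subset_compl.mpr (Set.subset_insert _ _))
  apply hnotex
  refine ⟨insert h S, insert F S, hT1, hT2, Set.ssubset_insert hhA.1, Set.ssubset_insert hFS, ?_⟩
  ext y
  constructor
  · intro hy; exact ⟨Set.mem_insert_of_mem _ hy, Set.mem_insert_of_mem _ hy⟩
  · rintro ⟨(rfl | hy1), (hy2 | hy2)⟩
    · exact absurd hy2 hhne
    · exact hy2
    · exact hy1
    · exact hy1
lemma CNS_eq (F : ℕ) : CNS F = (({0} : Set ℕ) ∪ {n : ℕ | F / 2 + 1 ≤ n}) \ {F} := by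
  unfold CNS
  by_cases h : Odd F
  · rw [if_pos h]
    obtain ⟨m, rfl⟩ := h
    have : (2 * m + 1 + 1) / 2 = (2 * m + 1) / 2 + 1 := by omega
    rw [this]
  · rw [if_neg h]

lemma memCNS (F : ℕ) (n : ℕ) : n ∈ CNS F ↔ (n = 0 ∨ F / 2 + 1 ≤ n) ∧ n ≠ F := by
  rw [CNS_eq]
  simp only [Set.mem_diff, Set.mem_union, Set.mem_singleton_iff, Set.mem_setOf_eq]

lemma frob_CNS (F : ℕ) (hF : 0 < F) : frobNS (CNS F) = (F : ℤ) := by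
  apply frob_eq
  · rw [memCNS]; omega
  · intro n hn
    rw [memCNS] at hn
    omega

lemma part1 (F : ℕ) (hF : 0 < F) :
    ((CNS F) \ thetaNS (CNS F)).ncard = (F - 1) / 2 := by
  have hfr := frob_CNS F hF
  have hdelta : deltaNS (CNS F) = {0} := by
    ext s
    simp only [deltaNS, hfr, Set.mem_setOf_eq, Set.mem_singleton_iff, memCNS]
    constructor
    · rintro ⟨h1, h3⟩
      have : 2 * s < F := by exact_mod_cast h3
      omega
    · rintro rfl
      refine ⟨by omega, by push_cast; omega⟩
  have hgen : genNS (deltaNS (CNS F)) = {0} := by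
    rw [hdelta]
    apply Set.Subset.antisymm
    · exact genNS_subset rfl (by rintro a rfl b rfl; rfl) subset_rfl
    · rintro s rfl
      exact AddSubmonoid.subset_closure rfl
  have hset : (CNS F) \ thetaNS (CNS F) = Set.Ico (F / 2 + 1) F := by
    ext n
    simp only [thetaNS, hgen, hfr, Set.mem_diff, Set.mem_union, Set.mem_singleton_iff,
      Set.mem_setOf_eq, Set.mem_Ico, not_or, not_lt, memCNS]
    constructor
    · rintro ⟨h1, h3, h4⟩
      have : n ≤ F := by exact_mod_cast h4
      omega
    · rintro ⟨h1, h2⟩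
      refine ⟨by omega, by omega, by push_cast; omega⟩
  rw [hset, ← Finset.coe_Ico, Set.ncard_coe_finset, Nat.card_Ico]
  omega
lemma part2 {F : ℕ} (hF : 0 < F) {P : Set ℕ} {x : ℕ}
    (hirr : IsIrreducibleNS P) (hfrP : frobNS P = (F : ℤ)) (hx : x ∈ msgNS P)
    (hx1 : (F : ℤ) < 2 * (x : ℤ)) (hx2 : x < F)
    (hx3 : 2 * (x : ℤ) - (F : ℤ) ∉ toZNS P)
    (h3x : 3 * x ≠ 2 * F) (h4x : 4 * x ≠ 3 * F) (hmlt : F - x < multNS P) :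
    IsNumericalSemigroup ((P \ {x}) ∪ {F - x}) ∧
    frobNS ((P \ {x}) ∪ {F - x}) = (F : ℤ) ∧
    (((P \ {x}) ∪ {F - x}) \ thetaNS ((P \ {x}) ∪ {F - x})).ncard <
      (P \ thetaNS P).ncard := by
  have hP := hirr.1
  have hFx : F < 2 * x := by exact_mod_cast hx1
  obtain ⟨hxP, hx0, hmsg⟩ := hx
  have hub : ∀ n : ℕ, n ∉ P → n ≤ F := fun n hn => by
    have := frob_ub hP hn; rw [hfrP] at this; exact_mod_cast this
  have hsym := irred_symm hirr hfrP hF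
  have hd : (2 * x - F : ℕ) ∉ P := fun h => hx3 ⟨_, h, by push_cast; omega⟩
  have key1 : ∀ b ∈ P, b ≠ x → b ≠ 0 → (F - x) + b ∈ P ∧ (F - x) + b ≠ x := by
    intro b hb hbx hb0
    have hne : (F - x) + b ≠ x := by
      intro he
      have hbe : b = 2 * x - F := by omega
      exact hd (hbe ▸ hb)
    refine ⟨?_, hne⟩
    by_contra hc
    have hbF : (F - x) + b ≤ F := hub _ hc
    have hbx2 : b < x := by
      rcases Nat.lt_or_ge b x with h' | h'
      · exact h'
      · exfalso; have : (F - x) + b = F := by omega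
        apply hbx; omega
    have h2 : 2 * ((F - x) + b) ≠ F := by
      intro he
      have h2b : b + b = 2 * x - F := by omega
      exact hd (h2b ▸ hP.2.1 b hb b hb)
    have hmem := hsym _ hc h2
    have heq : F - ((F - x) + b) = x - b := by omega
    rw [heq] at hmem
    exact hmsg _ hmem _ hb (by omega) hb0 (by omega)
  have key2 : (F - x) + (F - x) ∈ P ∧ (F - x) + (F - x) ≠ x := by
    constructor
    · by_contra hc
      have h2 : 2 * ((F - x) + (F - x)) ≠ F := by omega
      have hmem := hsym _ hc h2
      have heq : F - ((F - x) + (F - x)) = 2 * x - F := by omega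
      rw [heq] at hmem
      exact hd hmem
    · omega
  have hgP : F - x ∉ P := by
    intro h
    have : multNS P ≤ F - x := Nat.sInf_le ⟨h, by simp; omega⟩
    omega
  set Q : Set ℕ := (P \ {x}) ∪ {F - x} with hQdef
  have hmemQ : ∀ n : ℕ, n ∈ Q ↔ (n ∈ P ∧ n ≠ x) ∨ n = F - x := by
    intro n
    simp only [hQdef, Set.mem_union, Set.mem_diff, Set.mem_singleton_iff]
  have hQ : IsNumericalSemigroup Q := by
    refine ⟨(hmemQ 0).mpr (Or.inl ⟨hP.1, fun h => hx0 h.symm⟩), ?_, ?_⟩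
    · intro a ha b hb
      rw [hmemQ] at ha hb ⊢
      rcases ha with ⟨ha, hax⟩ | rfl
      · rcases hb with ⟨hb, hbx⟩ | rfl
        · refine Or.inl ⟨hP.2.1 _ ha _ hb, ?_⟩
          rcases eq_or_ne a 0 with rfl | ha0
          · simpa using hbx
          rcases eq_or_ne b 0 with rfl | hb0
          · simpa using hax
          exact hmsg _ ha _ hb ha0 hb0
        · rcases eq_or_ne a 0 with rfl | ha0
          · exact Or.inr (by omega)
          · obtain ⟨h1, h2⟩ := key1 a ha hax ha0
            exact Or.inl ⟨by rwa [add_comm] at h1, by rwa [add_comm] at h2⟩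
      · rcases hb with ⟨hb, hbx⟩ | rfl
        · rcases eq_or_ne b 0 with rfl | hb0
          · exact Or.inr (by omega)
          · exact Or.inl (key1 b hb hbx hb0)
        · exact Or.inl key2
    · apply (hP.2.2.union (Set.finite_singleton x)).subset
      intro n hn
      rw [Set.mem_compl_iff, hmemQ] at hn
      push_neg at hn
      rcases Classical.em (n ∈ P) with h | h
      · exact Or.inr (hn.1 h)
      · exact Or.inl h
  have hFP : F ∉ P := frob_notMem hP hfrP
  have hfrQ : frobNS Q = (F : ℤ) := by
    apply frob_eq
    · rw [hmemQ]
      push_neg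
      exact ⟨fun h => absurd h hFP, by omega⟩
    · intro n hn
      rw [hmemQ] at hn
      push_neg at hn
      rcases Classical.em (n ∈ P) with h | h
      · have := hn.1 h; omega
      · exact hub n h
  have hdsub : deltaNS P ⊆ deltaNS Q := by
    rintro s ⟨hs, hs2⟩
    rw [hfrP] at hs2
    have hsx : s ≠ x := by
      intro rfl'
      subst rfl'
      have : 2 * s < F := by exact_mod_cast hs2
      omega
    exact ⟨(hmemQ s).mpr (Or.inl ⟨hs, hsx⟩), by rw [hfrQ]; exact hs2⟩
  have hθ : thetaNS P ⊆ thetaNS Q := by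
    rintro y (hy | hy)
    · exact Or.inl (AddSubmonoid.closure_mono hdsub hy)
    · right; rw [Set.mem_setOf_eq, hfrQ]; rw [Set.mem_setOf_eq, hfrP] at hy; exact hy
  have hgθ : (F - x) ∈ thetaNS Q := by
    left
    apply AddSubmonoid.subset_closure
    refine ⟨(hmemQ _).mpr (Or.inr rfl), ?_⟩
    rw [hfrQ]; push_cast; omega
  have hxθ : x ∉ thetaNS P := by
    rintro (h | h)
    · have hT : genNS (deltaNS P) ⊆ {y ∈ P | y ≠ x} := by
        apply genNS_subset
        · exact ⟨hP.1, fun he => hx0 he.symm⟩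
        · rintro a ⟨ha, hax⟩ b ⟨hb, hbx⟩
          refine ⟨hP.2.1 _ ha _ hb, ?_⟩
          rcases eq_or_ne a 0 with rfl | ha0
          · simpa using hbx
          rcases eq_or_ne b 0 with rfl | hb0
          · simpa using hax
          exact hmsg _ ha _ hb ha0 hb0
        · rintro s ⟨hs, hs2⟩
          rw [hfrP] at hs2
          have : 2 * s < F := by exact_mod_cast hs2
          exact ⟨hs, by omega⟩
      exact (hT h).2 rfl
    · rw [Set.mem_setOf_eq, hfrP] at h
      have : F < x := by exact_mod_cast h
      omega
  have hfinP : (P \ thetaNS P).Finite := by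
    apply (Set.finite_Iic F).subset
    rintro y ⟨hy1, hy2⟩
    rw [Set.mem_Iic]
    by_contra hc
    exact hy2 (Or.inr (by rw [Set.mem_setOf_eq, hfrP]; push_cast; omega))
  have hsub : Q \ thetaNS Q ⊆ (P \ thetaNS P) \ {x} := by
    rintro y ⟨hyQ, hyθ⟩
    have hyg : y ≠ F - x := fun he => hyθ (he ▸ hgθ)
    rcases (hmemQ y).mp hyQ with ⟨hyP, hyx⟩ | he
    · exact ⟨⟨hyP, fun h => hyθ (hθ h)⟩, hyx⟩
    · exact absurd he hyg
  refine ⟨hQ, hfrQ, ?_⟩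
  calc (Q \ thetaNS Q).ncard ≤ ((P \ thetaNS P) \ {x}).ncard :=
        Set.ncard_le_ncard hsub hfinP.diff
    _ < (P \ thetaNS P).ncard :=
        Set.ncard_diff_singleton_lt_of_mem ⟨hxP, hxθ⟩ hfinP
/-- (1) #(C(F)∖θ(C(F))) = ⌊(F−1)/2⌋. (2) If P is irreducible with
Frobenius number F, x ∈ msg(P) with F/2 < x < F, 2x − F ∉ P, 3x ≠ 2F, 4x ≠ 3F and
F − x < m(P), then Q = (P∖{x}) ∪ {F − x} is a numerical semigroup with Frobenius
number F and #(Q∖θ(Q)) < #(P∖θ(P)). -/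
theorem stmt19 (F : ℕ) (hF : 0 < F) :
    ((CNS F) \ thetaNS (CNS F)).ncard = (F - 1) / 2 ∧
    (∀ P : Set ℕ, ∀ x : ℕ,
      IsIrreducibleNS P → frobNS P = (F : ℤ) → x ∈ msgNS P →
      (F : ℤ) < 2 * (x : ℤ) → x < F →
      2 * (x : ℤ) - (F : ℤ) ∉ toZNS P →
      3 * x ≠ 2 * F → 4 * x ≠ 3 * F → F - x < multNS P →
      IsNumericalSemigroup ((P \ {x}) ∪ {F - x}) ∧
      frobNS ((P \ {x}) ∪ {F - x}) = (F : ℤ) ∧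
      (((P \ {x}) ∪ {F - x}) \ thetaNS ((P \ {x}) ∪ {F - x})).ncard <
        (P \ thetaNS P).ncard) := by
  refine ⟨part1 F hF, ?_⟩
  intro P x hirr hfrP hx hx1 hx2 hx3 h3x h4x hmlt
  exact part2 hF hirr hfrP hx hx1 hx2 hx3 h3x h4x hmlt
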